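/- Let f : C ⥤ D be a functor of small categories, φ : Cᵒᵖ ⥤ Type a presheaf, and let F : PShv(C) ⥤ PShv(D) be the left Kan extension of (yoneda ∘ f) along yoneda (equivalently, left Kan extension of presheaves along fᵒᵖ). Then the induced functor on categories of elements El(φ) ⥤ El(F φ) (sending (c, x ∈ φ(c)) to (f c, image of x under the canonical map φ → (F φ) ∘ fᵒᵖ)) is a final functor. -/

import Mathlib

open CategoryTheory CategoryTheory.Limits

universe w v₁ v₂ u₁ u₂ u

/-- For `q : A ⥤ B` and `ψ : B ⥤ Type`, the functor on categories of elements
`(q ⋙ ψ).Elements ⥤ ψ.Elements` sending `(a, x)` to `(q.obj a, x)`. -/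
@[simps]
def compElements {A : Type u₁} [Category.{v₁} A] {B : Type u₂} [Category.{v₂} B]
    (q : A ⥤ B) (ψ : B ⥤ Type w) : (q ⋙ ψ).Elements ⥤ ψ.Elements where
  obj p := ⟨q.obj p.1, p.2⟩
  map {p p'} m := ⟨q.map m.val, m.property⟩
  map_id := by intro p; apply Subtype.ext; simp; rfl
  map_comp := by intro p p' p'' m m'; apply Subtype.ext; simp; rfl

/-- The left Kan extension functor on presheaves along `fᵒᵖ`; it is the unique
colimit-preserving functor `PShv(C) ⥤ PShv(D)` extending `yoneda ∘ f`. -/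
noncomputable abbrev presheafLan {C D : Type u} [SmallCategory C] [SmallCategory D]
    (f : C ⥤ D) : (Cᵒᵖ ⥤ Type u) ⥤ (Dᵒᵖ ⥤ Type u) :=
  f.op.lan

/-- Let `f : C ⥤ D` be a functor of small categories, `φ` a presheaf on `C`, and
`F φ = Lan_{fᵒᵖ} φ` its left Kan extension to a presheaf on `D`.  Then the induced functor
on (opposite) categories of elements `El(φ) ⥤ El(F φ)`, sending `(c, x)` to
`(f c, (unit)_c x)`, is final. -/
theorem elements_functor_of_presheaf_lan_final
    {C D : Type u} [SmallCategory C] [SmallCategory D]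
    (f : C ⥤ D) (φ : Cᵒᵖ ⥤ Type u) :
    ((NatTrans.mapElements (f.op.lanUnit.app φ) ⋙
        compElements f.op ((presheafLan f).obj φ)).op).Final := by
  set G := NatTrans.mapElements (f.op.lanUnit.app φ) ⋙
      compElements f.op ((presheafLan f).obj φ) with hG
  suffices h : G.Initial by exact Functor.final_op_of_initial G
  constructor
  intro e
  let J := CostructuredArrow f.op e.1
  let Fd : J ⥤ Type u := CostructuredArrow.proj f.op e.1 ⋙ φ
  let iso : ((presheafLan f).obj φ).obj e.1 ≅ colimit Fd :=
    f.op.leftKanExtensionObjIsoColimit φ e.1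
  let t : colimit Fd := iso.hom e.2
  have key : ∀ (p : Σ j : J, Fd.obj j), colimit.ι Fd p.1 p.2 = t →
      ((presheafLan f).obj φ).map p.1.hom ((f.op.lanUnit.app φ).app p.1.left p.2) = e.2 := by
    intro p hp
    have h1 := types_congr_hom (f.op.ι_leftKanExtensionObjIsoColimit_inv φ e.1 p.1) p.2
    dsimp at h1
    have h2 : iso.inv (colimit.ι Fd p.1 p.2) =
        ((presheafLan f).obj φ).map p.1.hom ((f.op.lanUnit.app φ).app p.1.left p.2) := h1
    rw [hp] at h2
    rw [← h2]
    exact iso.hom_inv_id_apply e.2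
  let O : ∀ p : Σ j : J, Fd.obj j, colimit.ι Fd p.1 p.2 = t → CostructuredArrow G e :=
    fun p hp => CostructuredArrow.mk
      (Y := φ.elementsMk p.1.left p.2)
      (⟨p.1.hom, key p hp⟩ : G.obj (φ.elementsMk p.1.left p.2) ⟶ e)
  have mor : ∀ (p q : Σ j : J, Fd.obj j) (hp : colimit.ι Fd p.1 p.2 = t)
      (hq : colimit.ι Fd q.1 q.2 = t) (m : p.1 ⟶ q.1), q.2 = Fd.map m p.2 →
      (O p hp ⟶ O q hq) := by
    intro p q hp hq m hm
    refine CostructuredArrow.homMk (⟨m.left, hm.symm⟩ : φ.elementsMk p.1.left p.2 ⟶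
      φ.elementsMk q.1.left q.2) ?_
    apply Subtype.ext
    exact CostructuredArrow.w m
  -- each object of `CostructuredArrow G e` is of the form `O p hp`
  have hι : ∀ o : CostructuredArrow G e,
      colimit.ι Fd (CostructuredArrow.mk o.hom.val) o.left.2 = t := by
    intro o
    have h1 := types_congr_hom
      (f.op.ι_leftKanExtensionObjIsoColimit_hom φ e.1 (CostructuredArrow.mk o.hom.val)) o.left.2
    dsimp at h1
    refine h1.symm.trans ?_
    have h2 : ((presheafLan f).obj φ).map o.hom.val
        ((f.op.lanUnit.app φ).app o.left.1 o.left.2) = e.2 := o.hom.property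
    exact congrArg iso.hom h2
  have hOo : ∀ o : CostructuredArrow G e,
      O ⟨CostructuredArrow.mk o.hom.val, o.left.2⟩ (hι o) = o := by
    intro o
    rfl
  obtain ⟨j0, z0, hz0⟩ := Types.jointly_surjective' (F := Fd) t
  haveI : Nonempty (CostructuredArrow G e) := ⟨O ⟨j0, z0⟩ hz0⟩
  apply zigzag_isConnected
  intro o₁ o₂
  have main : ∀ (p q : Σ j : J, Fd.obj j), Relation.EqvGen (Fd.ColimitTypeRel) p q →
      (colimit.ι Fd p.1 p.2 = t ↔ colimit.ι Fd q.1 q.2 = t) ∧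
      ∀ hp hq, Zigzag (O p hp) (O q hq) := by
    intro p q h
    induction h with
    | rel p q hr =>
      obtain ⟨m, hm⟩ := hr
      have hw : colimit.ι Fd p.1 p.2 = colimit.ι Fd q.1 q.2 := by
        rw [hm]
        exact (Types.Colimit.w_apply m).symm
      exact ⟨by rw [hw], fun hp hq =>
        Relation.ReflTransGen.single (Or.inl ⟨mor p q hp hq m hm⟩)⟩
    | refl p => exact ⟨Iff.rfl, fun hp hq => Relation.ReflTransGen.refl⟩
    | symm p q _ ih => exact ⟨ih.1.symm, fun hq hp => Zigzag.symm (ih.2 hp hq)⟩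
    | trans p q r _ _ ih₁ ih₂ =>
      exact ⟨ih₁.1.trans ih₂.1, fun hp hr =>
        Relation.ReflTransGen.trans (ih₁.2 hp (ih₁.1.mp hp)) (ih₂.2 (ih₁.1.mp hp) hr)⟩
  have h1 := hι o₁
  have h2 := hι o₂
  have hz := (main _ _ (Types.colimit_eq (h1.trans h2.symm))).2 h1 h2
  rw [hOo o₁, hOo o₂] at hz
  exact hz
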